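/- Let A be a C*-algebra and let a, b ∈ A satisfy ‖a‖ ≤ 1, ‖b‖ ≤ 1, a·b·a = a, b·a·b = b, and suppose both products a·b and b·a are self-adjoint. Then b = star a; in particular a·(star a)·a = a (so a is a partial isometry), (star a)·a = b·a and a·(star a) = a·b. -/

import Mathlib

lemma aux_key {A : Type*} [NonUnitalCStarAlgebra A]
    (a b : A) (ha : ‖a‖ ≤ 1) (hb : ‖b‖ ≤ 1)
    (haba : a * b * a = a) (hba : IsSelfAdjoint (b * a)) :
    star a * a = b * a := by
  let _ : PartialOrder (Unitization ℂ A) := CStarAlgebra.spectralOrder _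
  have _ : StarOrderedRing (Unitization ℂ A) := CStarAlgebra.spectralOrderedRing _
  set a' : Unitization ℂ A := (a : Unitization ℂ A) with ha'
  set b' : Unitization ℂ A := (b : Unitization ℂ A) with hb'
  have haba' : a' * b' * a' = a' := by
    rw [ha', hb', ← Unitization.inr_mul ℂ, ← Unitization.inr_mul ℂ, haba]
  have hba' : star (b' * a') = b' * a' := by
    rw [ha', hb', ← Unitization.inr_mul ℂ, ← Unitization.inr_star, hba.star_eq]
  have hna : ‖a'‖ ≤ 1 := by rwa [ha', Unitization.norm_inr]
  have hnb : ‖b'‖ ≤ 1 := by rwa [hb', Unitization.norm_inr]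
  set p : Unitization ℂ A := b' * a' with hp
  have hpp : p * p = p := by rw [hp, mul_assoc, ← mul_assoc a', haba']
  have hap : a' * p = a' := by rw [hp, ← mul_assoc, haba']
  have hpa : p * star a' = star a' := by
    conv_lhs => rw [← hba']
    rw [← star_mul, hap]
  have hsa1 : star a' * a' ≤ 1 := by
    rw [← CStarAlgebra.norm_le_one_iff_of_nonneg _ (star_mul_self_nonneg a')]
    calc ‖star a' * a'‖ = ‖a'‖ * ‖a'‖ := CStarRing.norm_star_mul_self
      _ ≤ 1 * 1 := mul_le_mul hna hna (norm_nonneg _) zero_le_one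
      _ = 1 := one_mul 1
  have hsb1 : star b' * b' ≤ 1 := by
    rw [← CStarAlgebra.norm_le_one_iff_of_nonneg _ (star_mul_self_nonneg b')]
    calc ‖star b' * b'‖ = ‖b'‖ * ‖b'‖ := CStarRing.norm_star_mul_self
      _ ≤ 1 * 1 := mul_le_mul hnb hnb (norm_nonneg _) zero_le_one
      _ = 1 := one_mul 1
  have h1 : star a' * a' ≤ p := by
    have key : star a' * a' = star p * (star a' * a') * p := by
      rw [hba']
      calc star a' * a' = (p * star a') * (a' * p) := by rw [hpa, hap]
        _ = p * (star a' * a') * p := by simp only [mul_assoc]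
    calc star a' * a' = star p * (star a' * a') * p := key
      _ ≤ star p * 1 * p := star_left_conjugate_le_conjugate hsa1 p
      _ = p := by rw [mul_one, hba', hpp]
  have h2 : p ≤ star a' * a' := by
    have key : p = star a' * (star b' * b') * a' := by
      calc p = star p * p := by rw [hba', hpp]
        _ = (star a' * star b') * (b' * a') := by rw [hp, star_mul]
        _ = star a' * (star b' * b') * a' := by simp only [mul_assoc]
    calc p = star a' * (star b' * b') * a' := key
      _ ≤ star a' * 1 * a' := star_left_conjugate_le_conjugate hsb1 a'
      _ = star a' * a' := by rw [mul_one]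
  have hmain : star a' * a' = p := le_antisymm h1 h2
  have : ((star a * a : A) : Unitization ℂ A) = ((b * a : A) : Unitization ℂ A) := by
    rw [Unitization.inr_mul ℂ, Unitization.inr_mul ℂ, Unitization.inr_star]
    exact hmain
  exact Unitization.inr_injective (R := ℂ) this

/-- C*-algebra characterization of partial isometries: if `a`, `b` are contractions with
`a*b*a = a`, `b*a*b = b` and both `a*b`, `b*a` self-adjoint, then `b = star a`; in particular
`a` is a partial isometry with source projection `b*a` and range projection `a*b`. -/
theorem stmt0 {A : Type*} [NonUnitalCStarAlgebra A]
    (a b : A) (ha : ‖a‖ ≤ 1) (hb : ‖b‖ ≤ 1)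
    (haba : a * b * a = a) (hbab : b * a * b = b)
    (hab : IsSelfAdjoint (a * b)) (hba : IsSelfAdjoint (b * a)) :
    b = star a ∧ a * star a * a = a ∧ star a * a = b * a ∧ a * star a = a * b := by
  have k2 : star b * b = a * b := aux_key b a hb ha hbab hab
  have k3 : a * star a = a * b := by
    have h1 : star a * star b * star a = star a := by
      rw [← star_mul, ← star_mul, ← mul_assoc, haba]
    have h2 : IsSelfAdjoint (star b * star a) := by
      rw [← star_mul, hab.star_eq]; exact hab
    have := aux_key (star a) (star b) (by rwa [norm_star]) (by rwa [norm_star]) h1 h2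
    rw [star_star, ← star_mul, hab.star_eq] at this
    exact this
  have hb_eq : b = star a := by
    have hzero : star (b - star a) * (b - star a) = 0 := by
      have h4 : star b * star a = a * b := by rw [← star_mul, hab.star_eq]
      rw [star_sub, star_star, sub_mul, mul_sub, mul_sub, k2, k3, h4]
      simp
    have := CStarRing.star_mul_self_eq_zero_iff (b - star a) |>.mp hzero
    exact sub_eq_zero.mp this
  subst hb_eq
  exact ⟨rfl, by rw [← k3] at haba ⊢; exact haba, aux_key a (star a) ha hb haba hba, k3⟩
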